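/- If a quantitative automaton A is k-history-deterministic for some finite k (Eve wins the k-runs letter game) and Eve wins the k-token game G_k(A), then A is history-deterministic (Eve wins the letter game). -/

import Mathlib

/-- A (total) nondeterministic quantitative automaton with alphabet `α`,
states `Q` and weights `W`. -/
structure QAut (α Q W : Type) where
  init : Q
  trans : Set (Q × α × W × Q)
  total : ∀ q a, ∃ x q', (q, a, x, q') ∈ trans

namespace QAut

variable {α Q W : Type} (A : QAut α Q W)

/-- The state reached after `n` transitions of `τ`, starting from `q`. -/
def stateAt (q : Q) (τ : ℕ → W × Q) : ℕ → Q
  | 0 => q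
  | n + 1 => (τ n).2

/-- `τ` is a legal infinite run of `A` from `q` over word `w`. -/
def RunFrom (q : Q) (w : ℕ → α) (τ : ℕ → W × Q) : Prop :=
  ∀ n, (stateAt q τ n, w n, (τ n).1, (τ n).2) ∈ A.trans

/-- `τ` is a legal infinite run of `A` (from the initial state) over word `w`. -/
def RunOn (w : ℕ → α) (τ : ℕ → W × Q) : Prop := A.RunFrom A.init w τ

/-- The value of automaton `A` on word `w`: the supremum of the values of all runs. -/
noncomputable def wordVal (Val : (ℕ → W) → ℝ) (w : ℕ → α) : ℝ :=
  sSup { v | ∃ τ, A.RunOn w τ ∧ v = Val (fun n => (τ n).1) }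

/-- A round of the `k`-token game: the letter played by Adam, Eve's transition,
and Adam's `k` transitions. -/
abbrev GkRound (α Q W : Type) (k : ℕ) := α × (W × Q) × (Fin k → W × Q)

/-- A strategy of Eve in the `k`-token game: given the history of rounds so far
and the current letter, pick a transition. -/
abbrev GkStrat (α Q W : Type) (k : ℕ) := List (GkRound α Q W k) → α → W × Q

/-- A play of the `k`-token game is consistent with Eve's strategy `s`. -/
def GkConsistent {k : ℕ} (s : GkStrat α Q W k) (π : ℕ → GkRound α Q W k) : Prop :=
  ∀ n, (π n).2.1 = s ((List.range n).map π) (π n).1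

/-- Eve's strategy `s` is winning in the `k`-token game with winning condition `good`
(comparing Eve's weight sequence with Adam's `k` weight sequences): on every
consistent play in which Adam's `k` tokens trace legal runs, Eve's token traces
a legal run and the condition `good` holds. -/
def GkWinning (k : ℕ) (good : (ℕ → W) → (Fin k → ℕ → W) → Prop)
    (s : GkStrat α Q W k) : Prop :=
  ∀ π : ℕ → GkRound α Q W k, GkConsistent s π →
    (∀ j, A.RunOn (fun n => (π n).1) (fun n => (π n).2.2 j)) →
    A.RunOn (fun n => (π n).1) (fun n => (π n).2.1) ∧
      good (fun n => ((π n).2.1).1) (fun j n => ((π n).2.2 j).1)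

/-- Eve wins the `k`-token game `G_k(A)` with winning condition `good`. -/
def EveWinsGk (k : ℕ) (good : (ℕ → W) → (Fin k → ℕ → W) → Prop) : Prop :=
  ∃ s, A.GkWinning k good s

/-- The value-comparison winning condition of token games for value function `Val`:
Eve's run's value is at least the maximum of the values of Adam's runs. -/
def goodVal (Val : (ℕ → W) → ℝ) {k : ℕ} (ve : ℕ → W) (va : Fin k → ℕ → W) : Prop :=
  ∀ j, Val (va j) ≤ Val ve

/-- A round of the letter game: the letter played by Adam and Eve's transition. -/
abbrev LRound (α Q W : Type) := α × (W × Q)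

/-- A strategy of Eve in the letter game. -/
abbrev LStrat (α Q W : Type) := List (LRound α Q W) → α → W × Q

/-- A play of the letter game is consistent with Eve's strategy `s`. -/
def LConsistent (s : LStrat α Q W) (π : ℕ → LRound α Q W) : Prop :=
  ∀ n, (π n).2 = s ((List.range n).map π) (π n).1

/-- `s` is winning for Eve in the letter game with winning condition `good`
(a predicate of the word and Eve's weight sequence). -/
def LetterWinning (good : (ℕ → α) → (ℕ → W) → Prop) (s : LStrat α Q W) : Prop :=
  ∀ π : ℕ → LRound α Q W, LConsistent s π →
    A.RunOn (fun n => (π n).1) (fun n => (π n).2) ∧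
      good (fun n => (π n).1) (fun n => ((π n).2).1)

/-- `s` witnesses history-determinism: it wins the letter game, where Eve wins a
play iff the value of her run is at least the value of the word. -/
def HDWinning (Val : (ℕ → W) → ℝ) (s : LStrat α Q W) : Prop :=
  A.LetterWinning (fun w ve => A.wordVal Val w ≤ Val ve) s

/-- `A` is history-deterministic for value function `Val`: Eve wins the letter game. -/
def HD (Val : (ℕ → W) → ℝ) : Prop := ∃ s, A.HDWinning Val s

/-- A round of the `k`-runs letter game: a letter and Eve's `k` transitions. -/
abbrev KRound (α Q W : Type) (k : ℕ) := α × (Fin k → W × Q)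

/-- `A` is `k`-history-deterministic: Eve wins the `k`-runs letter game, in which
she moves `k` tokens and wins if the maximum of her runs' values equals the
value of the word. -/
noncomputable def kHD (k : ℕ) (Val : (ℕ → W) → ℝ) : Prop :=
  ∃ s : List (KRound α Q W k) → α → Fin k → W × Q,
    ∀ π : ℕ → KRound α Q W k,
      (∀ n, (π n).2 = s ((List.range n).map π) (π n).1) →
      (∀ j, A.RunOn (fun n => (π n).1) (fun n => (π n).2 j)) ∧
        (⨆ j, Val (fun n => ((π n).2 j).1)) = A.wordVal Val (fun n => (π n).1)

/-- `h` is a legal finite run prefix of `A` from state `q`. -/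
def FinRun (A : QAut α Q W) : Q → List (LRound α Q W) → Prop
  | _, [] => True
  | q, (a, xq) :: t => (q, a, xq.1, xq.2) ∈ A.trans ∧ FinRun A xq.2 t

/-- The state at the end of a finite run prefix starting from `q`. -/
def endSt : Q → List (LRound α Q W) → Q
  | q, [] => q
  | _, (_, xq) :: t => endSt xq.2 t

/-- The infinite weight sequence obtained by following the finite prefix `pre`
and then the infinite sequence `f`. -/
def splice (pre : List W) (f : ℕ → W) : ℕ → W := fun n =>
  if h : n < pre.length then pre.get ⟨n, h⟩ else f (n - pre.length)

/-- The move `t` of Eve, on letter `σ` after history `h`, is non-cautious: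
there is a continuation word `u` (starting with `σ`) and a run `π'` on it from the
current state whose value (together with the prefix) strictly exceeds the value of
every run on `u` starting with `t`. -/
def NonCautious (Val : (ℕ → W) → ℝ) (h : List (LRound α Q W)) (σ : α) (t : W × Q) : Prop :=
  ∃ u : ℕ → α, u 0 = σ ∧ ∃ π', A.RunFrom (endSt A.init h) u π' ∧
    ∀ π, A.RunFrom (endSt A.init h) u π → π 0 = t →
      Val (splice (h.map (fun r => r.2.1)) (fun n => (π n).1)) <
        Val (splice (h.map (fun r => r.2.1)) (fun n => (π' n).1))

/-- A finite history is consistent with Eve's letter-game strategy `s`. -/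
def HistConsistent (s : LStrat α Q W) (h : List (LRound α Q W)) : Prop :=
  ∀ n (hn : n < h.length), (h.get ⟨n, hn⟩).2 = s (h.take n) (h.get ⟨n, hn⟩).1

/-- Eve's letter-game strategy `s` is cautious: it never makes a non-cautious move
(along histories that arise when playing `s`). -/
def Cautious (Val : (ℕ → W) → ℝ) (s : LStrat α Q W) : Prop :=
  ∀ h, A.FinRun A.init h → HistConsistent s h →
    ∀ σ, ¬ A.NonCautious Val h σ (s h σ)

end QAut

namespace KHDGkAux

variable {α Q W : Type} {k : ℕ}

/-- Accumulate the simulated `k`-runs history along a list of letters. -/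
def kAccL (sK : List (QAut.KRound α Q W k) → α → Fin k → W × Q) :
    List (QAut.KRound α Q W k) → List α → List (QAut.KRound α Q W k)
  | hK, [] => hK
  | hK, a :: as => kAccL sK (hK ++ [(a, sK hK a)]) as

/-- Turn a letter-game history into a simulated `k`-token-game history. -/
def gAcc (sK : List (QAut.KRound α Q W k) → α → Fin k → W × Q) :
    List (QAut.KRound α Q W k) → List (QAut.LRound α Q W) →
      List (QAut.GkRound α Q W k)
  | _, [] => []
  | hK, (a, t) :: rest => (a, t, sK hK a) :: gAcc sK (hK ++ [(a, sK hK a)]) rest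

/-- The simulated `k`-runs history after `n` rounds on word `w`. -/
def kHistN (sK : List (QAut.KRound α Q W k) → α → Fin k → W × Q) (w : ℕ → α) :
    ℕ → List (QAut.KRound α Q W k)
  | 0 => []
  | n + 1 => kHistN sK w n ++ [(w n, sK (kHistN sK w n) (w n))]

theorem kAccL_append (sK : List (QAut.KRound α Q W k) → α → Fin k → W × Q)
    (as : List α) (a : α) :
    ∀ hK, kAccL sK hK (as ++ [a]) = kAccL sK hK as ++ [(a, sK (kAccL sK hK as) a)] := by
  induction as with
  | nil => intro hK; simp [kAccL]
  | cons b bs ih => intro hK; simp [kAccL, ih]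

theorem gAcc_append (sK : List (QAut.KRound α Q W k) → α → Fin k → W × Q)
    (l : List (QAut.LRound α Q W)) (a : α) (t : W × Q) :
    ∀ hK, gAcc sK hK (l ++ [(a, t)]) =
      gAcc sK hK l ++ [(a, t, sK (kAccL sK hK (l.map Prod.fst)) a)] := by
  induction l with
  | nil => intro hK; simp [gAcc, kAccL]
  | cons b bs ih =>
      intro hK
      obtain ⟨b1, b2⟩ := b
      simp [gAcc, ih, kAccL]

theorem kHistN_eq (sK : List (QAut.KRound α Q W k) → α → Fin k → W × Q)
    (w : ℕ → α) (n : ℕ) :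
    kHistN sK w n = kAccL sK [] ((List.range n).map w) := by
  induction n with
  | zero => simp [kHistN, kAccL]
  | succ n ih =>
      rw [List.range_succ, List.map_append]
      simp only [List.map_cons, List.map_nil]
      rw [kAccL_append, kHistN, ih]

end KHDGkAux

/-- If a quantitative automaton `A` is `k`-history-deterministic for
some finite `k` (Eve wins the `k`-runs letter game) and Eve wins the `k`-token
game `G_k(A)`, then `A` is history-deterministic (Eve wins the letter game). -/
theorem kHD_and_Gk_implies_HD {α Q W : Type} (A : QAut α Q W)
    (Val : (ℕ → W) → ℝ) (k : ℕ) (hk : 1 ≤ k)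
    (hkHD : A.kHD k Val) (hGk : A.EveWinsGk k (QAut.goodVal Val)) :
    A.HD Val := by
  classical
  obtain ⟨sK, hsK⟩ := hkHD
  obtain ⟨sG, hsG⟩ := hGk
  haveI : Nonempty (Fin k) := ⟨⟨0, hk⟩⟩
  -- Eve's letter-game strategy: play `sG` against the simulated `sK` tokens.
  refine ⟨fun h a => sG (KHDGkAux.gAcc sK [] h) a, ?_⟩
  intro π hπ
  set w : ℕ → α := fun n => (π n).1 with hw
  -- the simulated `k`-runs play
  set πK : ℕ → QAut.KRound α Q W k :=
    fun n => (w n, sK (KHDGkAux.kHistN sK w n) (w n)) with hπK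
  have hKmap : ∀ n, (List.range n).map πK = KHDGkAux.kHistN sK w n := by
    intro n
    induction n with
    | zero => simp [KHDGkAux.kHistN]
    | succ n ih =>
        rw [List.range_succ, List.map_append, KHDGkAux.kHistN, ih]
        simp [hπK]
  have hKcons : ∀ n, (πK n).2 = sK ((List.range n).map πK) (πK n).1 := by
    intro n; rw [hKmap]
  obtain ⟨hKruns, hKval⟩ := hsK πK hKcons
  -- the simulated `k`-token-game play
  set PiG : ℕ → QAut.GkRound α Q W k :=
    fun n => ((π n).1, (π n).2, (πK n).2) with hPiG
  have hGmap : ∀ n, (List.range n).map PiG = KHDGkAux.gAcc sK [] ((List.range n).map π) := by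
    intro n
    induction n with
    | zero => simp [KHDGkAux.gAcc]
    | succ n ih =>
        rw [List.range_succ, List.map_append, List.map_append]
        simp only [List.map_cons, List.map_nil]
        have : ((List.range n).map π).map Prod.fst = (List.range n).map w := by
          rw [List.map_map]; rfl
        rw [show (π n : QAut.LRound α Q W) = ((π n).1, (π n).2) from rfl,
          KHDGkAux.gAcc_append, this, ← KHDGkAux.kHistN_eq, ih]
  have hGcons : QAut.GkConsistent sG PiG := by
    intro n
    show (π n).2 = sG ((List.range n).map PiG) (π n).1
    rw [hGmap]
    exact hπ n
  have hGruns : ∀ j, A.RunOn (fun n => (PiG n).1) (fun n => (PiG n).2.2 j) := by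
    intro j
    exact hKruns j
  obtain ⟨hEveRun, hgood⟩ := hsG PiG hGcons hGruns
  refine ⟨hEveRun, ?_⟩
  have : A.wordVal Val w = ⨆ j, Val (fun n => ((πK n).2 j).1) := (hKval).symm
  show A.wordVal Val w ≤ Val fun n => (π n).2.1
  rw [this]
  exact ciSup_le fun j => hgood j
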